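/- Let G = (V, E) be a directed graph and s, t ∈ V. Build an NFA over alphabet {a, b} with states V ∪ {t'} (t' a fresh state), transitions {(p,a,r) | (p,r) ∈ E} together with (t,b,t'), where a is observable and b is unobservable, and let P be the corresponding projection to {a}*. Let L_S be the language accepted from initial state s with accepting set {t}, and L_NS the language accepted from s with accepting set {t'}. Then P(L_S) ∩ P(L_NS) ≠ ∅ if and only if t is reachable from s in G. -/

import Mathlib

/-- The automaton of STATEMENT 6: states `Option V` (`none` is the fresh state
`t'`), alphabet `Bool` where `false` is the observable event `a` and `true` is
the unobservable event `b`; `a`-transitions follow the edges of the graph and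
there is a single `b`-transition from `t` to `t'`. -/
def graphNFA {V : Type*} (E : V → V → Prop) (t : V) : NFA Bool (Option V) where
  step q e :=
    match q, e with
    | some p, false => {x | ∃ r, E p r ∧ x = some r}
    | some p, true => {x | p = t ∧ x = none}
    | none, _ => ∅
  start := ∅
  accept := ∅

/-- The projection to `{a}*` erasing the unobservable event `b = true`. -/
def projA (w : List Bool) : List Bool := w.filter (fun e => !e)

lemma graphNFA_sound {V : Type*} (E : V → V → Prop) (t : V) :
    ∀ (w : List Bool) (S : Set (Option V)) (q : V),
      some q ∈ (graphNFA E t).evalFrom S w →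
      ∃ p, some p ∈ S ∧ Relation.ReflTransGen E p q := by
  intro w
  induction w with
  | nil => intro S q h; exact ⟨q, h, .refl⟩
  | cons e w ih =>
    intro S q h
    obtain ⟨p, hpS, hp⟩ := ih ((graphNFA E t).stepSet S e) q h
    rw [NFA.mem_stepSet] at hpS
    obtain ⟨r, hrS, hr⟩ := hpS
    cases r with
    | none => cases hr
    | some r =>
      cases e with
      | false =>
        obtain ⟨x, hx, hxe⟩ := hr
        cases hxe
        exact ⟨r, hrS, .head hx hp⟩
      | true => exact absurd hr.2 (by simp)

lemma graphNFA_complete {V : Type*} (E : V → V → Prop) (t p q : V)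
    (h : Relation.ReflTransGen E p q) :
    ∃ w : List Bool, some q ∈ (graphNFA E t).evalFrom {some p} w := by
  induction h with
  | refl => exact ⟨[], rfl⟩
  | tail _ hE ih =>
    obtain ⟨w, hw⟩ := ih
    refine ⟨w ++ [false], ?_⟩
    rw [NFA.evalFrom_append, NFA.evalFrom_singleton, NFA.mem_stepSet]
    exact ⟨some _, hw, _, hE, rfl⟩

theorem weak_opacity_iff_reachable {V : Type*} (E : V → V → Prop) (s t : V) :
    (projA '' {w | some t ∈ (graphNFA E t).evalFrom {some s} w} ∩
      projA '' {w | none ∈ (graphNFA E t).evalFrom {some s} w}).Nonempty ↔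
      Relation.ReflTransGen E s t := by
  constructor
  · rintro ⟨x, ⟨w, hw, -⟩, -⟩
    obtain ⟨p, hp, hpath⟩ := graphNFA_sound E t w {some s} t hw
    obtain rfl : p = s := by simpa using hp
    exact hpath
  · intro h
    obtain ⟨w, hw⟩ := graphNFA_complete E t s t h
    refine ⟨projA w, ⟨w, hw, rfl⟩, ⟨w ++ [true], ?_, by simp [projA]⟩⟩
    rw [Set.mem_setOf_eq, NFA.evalFrom_append, NFA.evalFrom_singleton, NFA.mem_stepSet]
    exact ⟨_, hw, rfl, rfl⟩
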